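/- Let P ⊂ ℝ^d be a clean lattice d-polytope whose interior contains at least one lattice point, and let 𝒯 be a lattice triangulation of P. Let T ∈ 𝒯, let S be the convex hull of j+1 of the vertices of T (a j-face of T, 0 ≤ j ≤ d), and suppose some vertex of S is a lattice point in the interior of P. Then S is contained in at least d + 1 − j members of 𝒯. -/

import Mathlib

open MeasureTheory Set
open scoped ENNReal

noncomputable section

/-- A point of `ℝ^d` is a lattice point if all its coordinates are integers. -/
def IsLatticePt (d : ℕ) (x : Fin d → ℝ) : Prop := ∀ i, ∃ z : ℤ, x i = (z : ℝ)

/-- A lattice `d`-simplex: the convex hull of `d+1` affinely independent points of `ℤ^d`. -/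
def IsLatticeSimplex (d : ℕ) (T : Set (Fin d → ℝ)) : Prop :=
  ∃ v : Fin (d + 1) → Fin d → ℤ,
    AffineIndependent ℝ (fun i => fun j => ((v i j : ℤ) : ℝ)) ∧
    T = convexHull ℝ (Set.range (fun i => fun j => ((v i j : ℤ) : ℝ)))

/-- A lattice `d`-polytope: convex hull of a finite set of lattice points affinely
spanning `ℝ^d`. -/
def IsLatticePolytope (d : ℕ) (P : Set (Fin d → ℝ)) : Prop :=
  ∃ F : Finset (Fin d → ℤ),
    affineSpan ℝ ((fun v : Fin d → ℤ => fun j : Fin d => (v j : ℝ)) '' ↑F) = ⊤ ∧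
    P = convexHull ℝ ((fun v : Fin d → ℤ => fun j : Fin d => (v j : ℝ)) '' ↑F)

/-- Clean: the only lattice points on the boundary are the vertices (extreme points). -/
def IsClean (d : ℕ) (P : Set (Fin d → ℝ)) : Prop :=
  frontier P ∩ {x | IsLatticePt d x} = Set.extremePoints ℝ P

/-- Unimodular equivalence of subsets of `ℝ^d`. -/
def UnimodEquiv (d : ℕ) (P Q : Set (Fin d → ℝ)) : Prop :=
  ∃ (M : Matrix (Fin d) (Fin d) ℤ) (u : Fin d → ℤ),
    (M.det = 1 ∨ M.det = -1) ∧
    (fun x => (M.map (fun z : ℤ => (z : ℝ))).mulVec x + (fun i => (u i : ℝ))) '' P = Q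

/-- `S_d(k) = conv(e_1, …, e_d, -k(e_1 + ⋯ + e_d))`. -/
def Sdk (d k : ℕ) : Set (Fin d → ℝ) :=
  convexHull ℝ
    ((Set.range fun i : Fin d => (Pi.single i 1 : Fin d → ℝ)) ∪ {fun _ => -(k : ℝ)})

/-- `T_{a_1,…,a_d}`: vertex set `{0, e_1, …, e_{d-1}, (a_1,…,a_d)}`. -/
def Ta (d : ℕ) (a : Fin d → ℤ) : Set (Fin d → ℝ) :=
  convexHull ℝ
    ({(0 : Fin d → ℝ)} ∪
      {x | ∃ i : Fin d, i.val < d - 1 ∧ x = (Pi.single i 1 : Fin d → ℝ)} ∪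
      {fun i => (a i : ℝ)})

/-- The vertex set of a triangulation: the union of the vertex sets of its members. -/
def triVertices (d : ℕ) (𝒯 : Set (Set (Fin d → ℝ))) : Set (Fin d → ℝ) :=
  ⋃ T ∈ 𝒯, Set.extremePoints ℝ T

/-- `F` is a facet of the simplex `T`: the convex hull of all vertices of `T` but one. -/
def IsFacetOf (d : ℕ) (F T : Set (Fin d → ℝ)) : Prop :=
  ∃ u ∈ Set.extremePoints ℝ T, F = convexHull ℝ (Set.extremePoints ℝ T \ {u})

/-- A lattice triangulation of a lattice `d`-polytope `P`. -/
def IsLatticeTriangulation (d : ℕ) (P : Set (Fin d → ℝ))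
    (𝒯 : Set (Set (Fin d → ℝ))) : Prop :=
  -- a finite set of lattice d-simplices contained in P
  𝒯.Finite ∧
  (∀ T ∈ 𝒯, IsLatticeSimplex d T ∧ T ⊆ P) ∧
  -- every vertex of every member lies in P ∩ ℤ^d
  (∀ T ∈ 𝒯, ∀ x ∈ Set.extremePoints ℝ T, x ∈ P ∧ IsLatticePt d x) ∧
  -- every vertex of P is a vertex of some member
  (∀ x ∈ Set.extremePoints ℝ P, x ∈ triVertices d 𝒯) ∧
  -- interiors are pairwise disjoint
  (∀ T ∈ 𝒯, ∀ T' ∈ 𝒯, T ≠ T' → interior T ∩ interior T' = ∅) ∧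
  -- each facet lies in the boundary of P or is a common facet of exactly two members
  (∀ T ∈ 𝒯, ∀ F, IsFacetOf d F T →
      F ⊆ frontier P ∨
        ∃ T' ∈ 𝒯, T' ≠ T ∧ IsFacetOf d F T' ∧
          ∀ T'' ∈ 𝒯, IsFacetOf d F T'' → T'' = T ∨ T'' = T') ∧
  -- no member contains a point of the vertex set other than its own vertices
  (∀ T ∈ 𝒯, ∀ x ∈ triVertices d 𝒯, x ∈ T → x ∈ Set.extremePoints ℝ T) ∧
  -- the union of the members is P
  (⋃ T ∈ 𝒯, T) = P


/-- The extreme points of the convex hull of an affine basis are exactly the basis points. -/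
lemma extremePoints_convexHull_affineBasis {E : Type*} [AddCommGroup E] [Module ℝ E]
    {ι : Type*} [Fintype ι] (b : AffineBasis ι ℝ E) :
    Set.extremePoints ℝ (convexHull ℝ (Set.range b)) = Set.range b := by
  classical
  refine Set.Subset.antisymm extremePoints_convexHull_subset ?_
  rintro _ ⟨i, rfl⟩
  rw [(convex_convexHull ℝ _).mem_extremePoints_iff_convex_diff]
  refine ⟨subset_convexHull ℝ _ ⟨i, rfl⟩, ?_⟩
  have hnn : ∀ x ∈ convexHull ℝ (Set.range ⇑b), ∀ k, 0 ≤ b.coord k x := by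
    intro x hx k
    rw [b.convexHull_eq_nonneg_coord] at hx
    exact hx k
  have key : convexHull ℝ (Set.range ⇑b) \ {b i}
      = convexHull ℝ (Set.range ⇑b) ∩ (b.coord i) ⁻¹' (Set.Iio 1) := by
    ext x
    constructor
    · rintro ⟨hx, hxi⟩
      refine ⟨hx, ?_⟩
      have hsum : ∑ k, b.coord k x = 1 := b.sum_coord_apply_eq_one x
      have hle : b.coord i x ≤ 1 := by
        rw [← hsum]
        exact Finset.single_le_sum (fun k _ => hnn x hx k) (Finset.mem_univ i)
      rcases lt_or_eq_of_le hle with h | h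
      · exact h
      · exfalso
        apply hxi
        have hzero : ∀ k ∈ Finset.univ \ {i}, b.coord k x = 0 := by
          have hs0 : ∑ k ∈ Finset.univ \ {i}, b.coord k x = 0 := by
            have := Finset.sum_sdiff (Finset.singleton_subset_iff.2 (Finset.mem_univ i))
              (f := fun k => b.coord k x)
            rw [Finset.sum_singleton, hsum] at this
            linarith
          intro k hk
          have := (Finset.sum_eq_zero_iff_of_nonneg
            (fun k _ => hnn x hx k)).1 hs0 k hk
          exact this
        refine Set.mem_singleton_iff.2 (b.ext_elem fun k => ?_)
        rw [b.coord_apply]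
        by_cases hki : k = i
        · simp [hki, h]
        · simp only [hki, if_false]
          exact hzero k (by simp [hki])
    · rintro ⟨hx, hlt⟩
      refine ⟨hx, ?_⟩
      intro hxe
      rw [Set.mem_singleton_iff] at hxe
      rw [hxe] at hlt
      simp only [Set.mem_preimage, Set.mem_Iio, b.coord_apply_eq] at hlt
      exact lt_irrefl _ hlt
  rw [key]
  exact (convex_convexHull ℝ _).inter ((convex_Iio (1 : ℝ)).affine_preimage (b.coord i))

/-- Structural facts about a lattice `d`-simplex: it is the hull of its extreme points,
of which there are exactly `d + 1`. -/
lemma latticeSimplex_facts {d : ℕ} {T : Set (Fin d → ℝ)} (h : IsLatticeSimplex d T) :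
    T = convexHull ℝ (Set.extremePoints ℝ T) ∧ (Set.extremePoints ℝ T).ncard = d + 1 ∧
      (Set.extremePoints ℝ T).Finite := by
  obtain ⟨v, hv, rfl⟩ := h
  set p : Fin (d + 1) → Fin d → ℝ := fun i => fun j => ((v i j : ℤ) : ℝ) with hp
  have htop : affineSpan ℝ (Set.range p) = ⊤ := by
    rw [hv.affineSpan_eq_top_iff_card_eq_finrank_add_one]
    simp [Module.finrank_pi]
  let b : AffineBasis (Fin (d + 1)) ℝ (Fin d → ℝ) := ⟨p, hv, htop⟩
  have hbp : ⇑b = p := rfl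
  have hext : Set.extremePoints ℝ (convexHull ℝ (Set.range p)) = Set.range p := by
    conv_lhs => rw [← hbp]
    rw [extremePoints_convexHull_affineBasis b, hbp]
  have hinj : Function.Injective p := hv.injective
  have hcard : (Set.range p).ncard = d + 1 := by
    rw [Set.ncard_eq_toFinset_card', Set.toFinset_range,
      Finset.card_image_of_injective _ hinj, Finset.card_univ, Fintype.card_fin]
  refine ⟨by rw [hext], by rw [hext, hcard], by rw [hext]; exact Set.finite_range p⟩

/-- In a lattice triangulation `𝒯` of a clean, non-empty lattice
`d`-polytope `P`, a `j`-face `S` of a member `T` having a vertex which is an interior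
lattice point of `P` is contained in at least `d + 1 - j` members of `𝒯`. -/
theorem face_in_many_simplices (d j : ℕ) (hj : j ≤ d) (P : Set (Fin d → ℝ))
    (hP : IsLatticePolytope d P) (hclean : IsClean d P)
    (hne : ∃ x ∈ interior P, IsLatticePt d x)
    (𝒯 : Set (Set (Fin d → ℝ))) (h𝒯 : IsLatticeTriangulation d P 𝒯)
    (T : Set (Fin d → ℝ)) (hT : T ∈ 𝒯)
    (S V : Set (Fin d → ℝ))
    (hV : V ⊆ Set.extremePoints ℝ T) (hVcard : V.ncard = j + 1)
    (hS : S = convexHull ℝ V)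
    (hw : ∃ w ∈ V, IsLatticePt d w ∧ w ∈ interior P) :
    d + 1 - j ≤ {T' ∈ 𝒯 | S ⊆ T'}.ncard := by
  classical
  obtain ⟨hfin, hmem, -, -, -, hfacet, hvertone, -⟩ := h𝒯
  obtain ⟨w, hwV, -, hwint⟩ := hw
  -- the set of members containing S
  set 𝒮 : Set (Set (Fin d → ℝ)) := {T' ∈ 𝒯 | S ⊆ T'} with h𝒮
  have h𝒮fin : 𝒮.Finite := hfin.subset (Set.sep_subset _ _)
  obtain ⟨hThull, hTcard, hTfin⟩ := latticeSimplex_facts (hmem T hT).1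
  have hST : S ⊆ T := by
    rw [hS, hThull]
    exact convexHull_mono hV
  have hT𝒮 : T ∈ 𝒮 := ⟨hT, hST⟩
  -- the vertices of T outside V
  set N : Set (Fin d → ℝ) := Set.extremePoints ℝ T \ V with hN
  have hNfin : N.Finite := hTfin.diff
  have hNcard : N.ncard = d - j := by
    rw [hN, Set.ncard_diff hV (hTfin.subset hV), hTcard, hVcard]
    omega
  -- each u ∈ N yields a facet of T containing S, shared with another simplex
  have hex : ∀ u ∈ N, ∃ T', T' ∈ 𝒯 ∧ T' ≠ T ∧
      IsFacetOf d (convexHull ℝ (Set.extremePoints ℝ T \ {u})) T' := by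
    intro u hu
    have hfct : IsFacetOf d (convexHull ℝ (Set.extremePoints ℝ T \ {u})) T :=
      ⟨u, hu.1, rfl⟩
    have hwF : w ∈ convexHull ℝ (Set.extremePoints ℝ T \ {u}) :=
      subset_convexHull ℝ _ ⟨hV hwV, fun h => hu.2 (h ▸ hwV)⟩
    rcases hfacet T hT _ hfct with hfr | ⟨T', hT'𝒯, hT'T, hT'f, -⟩
    · exfalso
      exact (hfr hwF).2 hwint
    · exact ⟨T', hT'𝒯, hT'T, hT'f⟩
  choose! g hg𝒯 hgne hgf using hex
  -- S is contained in each facet, hence in each g u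
  have hSF : ∀ u ∈ N, S ⊆ convexHull ℝ (Set.extremePoints ℝ T \ {u}) := by
    intro u hu
    rw [hS]
    exact convexHull_mono fun x hx => ⟨hV hx, fun h => hu.2 (h ▸ hx)⟩
  have hFsub : ∀ u ∈ N, convexHull ℝ (Set.extremePoints ℝ T \ {u}) ⊆ g u := by
    intro u hu
    obtain ⟨a, ha, hFa⟩ := hgf u hu
    obtain ⟨hgu_hull, -, -⟩ := latticeSimplex_facts (hmem _ (hg𝒯 u hu)).1
    rw [hFa]
    exact (convexHull_mono Set.diff_subset).trans hgu_hull.symm.subset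
  have hmaps : ∀ u ∈ N, g u ∈ 𝒮 \ {T} := by
    intro u hu
    exact ⟨⟨hg𝒯 u hu, (hSF u hu).trans (hFsub u hu)⟩, hgne u hu⟩
  -- g is injective on N
  have hinj : Set.InjOn g N := by
    intro u hu u' hu' hgeq
    by_contra huu'
    -- all vertices of T lie in g u
    have hTsub : Set.extremePoints ℝ T ⊆ g u := by
      intro x hx
      by_cases hxu : x = u
      · rw [hgeq]
        exact hFsub u' hu' (subset_convexHull ℝ _
          ⟨hx, fun h => huu' (hxu.symm.trans h)⟩)
      · exact hFsub u hu (subset_convexHull ℝ _ ⟨hx, hxu⟩)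
    have hxt : Set.extremePoints ℝ T ⊆ Set.extremePoints ℝ (g u) := by
      intro x hx
      refine hvertone (g u) (hg𝒯 u hu) x ?_ (hTsub hx)
      exact Set.mem_biUnion hT hx
    obtain ⟨hgu_hull, hgu_card, hgu_fin⟩ := latticeSimplex_facts (hmem _ (hg𝒯 u hu)).1
    have heq : Set.extremePoints ℝ T = Set.extremePoints ℝ (g u) :=
      Set.eq_of_subset_of_ncard_le hxt (by rw [hTcard, hgu_card]) hgu_fin
    apply hgne u hu
    rw [hgu_hull, ← heq, ← hThull]
  -- counting
  have himg : (g '' N).ncard = N.ncard := Set.ncard_image_of_injOn hinj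
  have hsub : g '' N ⊆ 𝒮 \ {T} := by
    rintro _ ⟨u, hu, rfl⟩
    exact hmaps u hu
  have h1 : N.ncard ≤ (𝒮 \ {T}).ncard := by
    rw [← himg]
    exact Set.ncard_le_ncard hsub h𝒮fin.diff
  have h2 : (𝒮 \ {T}).ncard = 𝒮.ncard - 1 :=
    Set.ncard_diff_singleton_of_mem hT𝒮
  have h3 : 1 ≤ 𝒮.ncard := (Set.ncard_pos h𝒮fin).2 ⟨T, hT𝒮⟩
  rw [hNcard] at h1
  rw [h2] at h1
  omega
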